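/- For fixed η > 0 and t ∈ ℝ, the function g_t(x) = (1/2) log( ((x-t)²+η²)/(x²+η²) ) belongs to H^{1/2}(ℝ), i.e. the double integral ∬_{ℝ²} |g_t(x) - g_t(y)|²/(x-y)² dx dy is finite. -/

import Mathlib

open Real MeasureTheory

/-- If `(s-x)^2 ≤ c`, then `x^2+η^2` is bounded above by a fixed multiple of `s^2+η^2`. -/
lemma sq_lower_aux (η c s x : ℝ) (hη : 0 < η) (hc : 0 ≤ c) (h : (s - x)^2 ≤ c) :
    η^2/((2+2*c)*(1+η^2)) * (x^2+η^2) ≤ s^2+η^2 := by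
  have hd : (0:ℝ) < (2+2*c)*(1+η^2) := by positivity
  rw [div_mul_eq_mul_div, div_le_iff₀ hd]
  rcases le_or_gt (x^2) (2+2*c) with hx | hx
  · nlinarith [sq_nonneg s, sq_nonneg η, sq_nonneg x, sq_nonneg (s*η), sq_nonneg (x*η),
      mul_nonneg hc (sq_nonneg η)]
  · nlinarith [sq_nonneg (2*s-x), sq_nonneg η, sq_nonneg (s*η), sq_nonneg ((2*s-x)*η),
      mul_nonneg hc (sq_nonneg η), mul_nonneg (mul_nonneg hc hc) (sq_nonneg η)]

lemma sq_upper_aux (η c s x : ℝ) (hη : 0 < η) (hc : 0 ≤ c) (h : (s - x)^2 ≤ c) :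
    x^2+η^2 ≤ (2+2*c)*(1+η^2)/η^2 * (s^2+η^2) := by
  have h1 := sq_lower_aux η c s x hη hc h
  rw [div_mul_eq_mul_div, div_le_iff₀ (by positivity)] at h1
  rw [div_mul_eq_mul_div, le_div_iff₀ (by positivity)]
  nlinarith

/-- g_t(x) = (1/2) log(((x-t)²+η²)/(x²+η²)). -/
noncomputable def gReg (η t x : ℝ) : ℝ :=
  (1 / 2) * Real.log (((x - t) ^ 2 + η ^ 2) / (x ^ 2 + η ^ 2))

/-- The derivative of `gReg`. -/
noncomputable def gderiv (η t s : ℝ) : ℝ :=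
  (s - t) / ((s - t) ^ 2 + η ^ 2) - s / (s ^ 2 + η ^ 2)

lemma gReg_hasDerivAt (η t x : ℝ) (hη : 0 < η) :
    HasDerivAt (gReg η t) (gderiv η t x) x := by
  have hN : ∀ y : ℝ, (0:ℝ) < (y - t) ^ 2 + η ^ 2 := fun y => by positivity
  have hD : ∀ y : ℝ, (0:ℝ) < y ^ 2 + η ^ 2 := fun y => by positivity
  have heq : gReg η t
      = fun y => (1/2) * (Real.log ((y - t) ^ 2 + η ^ 2) - Real.log (y ^ 2 + η ^ 2)) := by
    funext y
    rw [gReg, Real.log_div (ne_of_gt (hN y)) (ne_of_gt (hD y))]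
  rw [heq]
  have h1 : HasDerivAt (fun y : ℝ => (y - t) ^ 2 + η ^ 2) (2 * (x - t)) x := by
    have := (((hasDerivAt_id x).sub_const t).pow 2).add_const (η^2)
    simpa using this
  have h2 : HasDerivAt (fun y : ℝ => y ^ 2 + η ^ 2) (2 * x) x := by
    have := ((hasDerivAt_id x).pow 2).add_const (η^2)
    simpa using this
  have h3 := ((h1.log (ne_of_gt (hN x))).sub (h2.log (ne_of_gt (hD x)))).const_mul (1/2 : ℝ)
  refine h3.congr_deriv ?_
  rw [gderiv]
  field_simp

lemma gderiv_bound (η t s : ℝ) (hη : 0 < η) :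
    |gderiv η t s| ≤ (|t|/2) * (1 + (2+2*t^2)*(1+η^2)/η^2) / (s^2 + η^2) := by
  set K := (2+2*t^2)*(1+η^2)/η^2 with hKdef
  have hK0 : (0:ℝ) < K := by rw [hKdef]; positivity
  have hKt : s^2+η^2 ≤ K * ((s-t)^2+η^2) := by
    have := sq_upper_aux η (t^2) (s-t) s hη (sq_nonneg t) (le_of_eq (by ring))
    calc s^2+η^2 ≤ (2+2*t^2)*(1+η^2)/η^2 * ((s-t)^2+η^2) := this
    _ = K * ((s-t)^2+η^2) := rfl
  have hN : (0:ℝ) < (s - t) ^ 2 + η ^ 2 := by positivity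
  have hD : (0:ℝ) < s ^ 2 + η ^ 2 := by positivity
  have heq : gderiv η t s = t * (s*(s-t) - η^2) / ((s ^ 2 + η ^ 2) * ((s - t) ^ 2 + η ^ 2)) := by
    rw [gderiv]; field_simp; ring
  rw [heq, abs_div, abs_of_pos (by positivity : (0:ℝ) < (s ^ 2 + η ^ 2) * ((s - t) ^ 2 + η ^ 2)),
    div_le_div_iff₀ (by positivity) hD]
  have h2 : |t * (s*(s-t) - η^2)| ≤ |t| * ((s^2+η^2)/2 + ((s-t)^2+η^2)/2) := by
    rw [abs_mul]
    gcongr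
    rw [abs_le]
    constructor <;> nlinarith [sq_nonneg (s - (s-t)), sq_nonneg (s + (s-t))]
  have h3 : |t| * ((s^2+η^2)/2 + ((s-t)^2+η^2)/2) ≤ (|t|/2) * (1 + K) * ((s-t)^2+η^2) := by
    nlinarith [abs_nonneg t]
  nlinarith [abs_nonneg t]

lemma g_sq_bound (η t x : ℝ) (hη : 0 < η) :
    (gReg η t x)^2 ≤ ((1 + (2+2*t^2)*(1+η^2)/η^2)/2)^2 * (2*t^4+8*t^2) / (min 1 (η^2))^2
      * (1+x^2)⁻¹ := by
  set K := (2+2*t^2)*(1+η^2)/η^2 with hKdef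
  have hK0 : (0:ℝ) < K := by rw [hKdef]; positivity
  set m := min 1 (η^2) with hmdef
  have hm0 : (0:ℝ) < m := lt_min one_pos (by positivity)
  have hm : m * (1+x^2) ≤ x^2+η^2 := by
    rcases le_total (η^2) 1 with h | h
    · rw [hmdef, min_eq_right h]; nlinarith
    · rw [hmdef, min_eq_left h]; nlinarith
  have hN : (0:ℝ) < (x - t) ^ 2 + η ^ 2 := by positivity
  have hD : (0:ℝ) < x ^ 2 + η ^ 2 := by positivity
  set r := ((x - t) ^ 2 + η ^ 2) / (x ^ 2 + η ^ 2) with hrdef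
  have hr : 0 < r := by positivity
  have habslog : |Real.log r| ≤ |r - 1| + |r⁻¹ - 1| := by
    have h1 := Real.log_le_sub_one_of_pos hr
    have h2 := Real.log_le_sub_one_of_pos (inv_pos.2 hr)
    rw [Real.log_inv] at h2
    rw [abs_le]
    constructor
    · nlinarith [le_abs_self (r⁻¹ - 1), abs_nonneg (r - 1)]
    · nlinarith [le_abs_self (r - 1), abs_nonneg (r⁻¹ - 1)]
  have hr1 : |r - 1| = |t^2-2*t*x| / (x^2+η^2) := by
    rw [show r - 1 = (t^2-2*t*x) / (x^2+η^2) by rw [hrdef]; field_simp; ring, abs_div,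
      abs_of_pos hD]
  have hr2 : |r⁻¹ - 1| = |t^2-2*t*x| / ((x-t)^2+η^2) := by
    rw [show r⁻¹ - 1 = (-(t^2-2*t*x)) / ((x-t)^2+η^2) by
      rw [hrdef, inv_div]; field_simp; ring, abs_div, abs_neg, abs_of_pos hN]
  have hNK : |t^2-2*t*x| / ((x-t)^2+η^2) ≤ K * (|t^2-2*t*x| / (x^2+η^2)) := by
    have hup : x^2+η^2 ≤ K * ((x-t)^2+η^2) :=
      sq_upper_aux η (t^2) (x-t) x hη (sq_nonneg t) (le_of_eq (by ring))
    rw [← mul_div_assoc, div_le_div_iff₀ hN hD]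
    nlinarith [abs_nonneg (t^2-2*t*x)]
  have habs : |gReg η t x| ≤ (1+K)/2 * (|t^2-2*t*x| / (x^2+η^2)) := by
    rw [gReg, abs_mul, abs_of_pos (by norm_num : (0:ℝ) < 1/2)]
    calc 1/2 * |Real.log r| ≤ 1/2 * (|r - 1| + |r⁻¹ - 1|) := by linarith [habslog]
      _ ≤ (1+K)/2 * (|t^2-2*t*x| / (x^2+η^2)) := by
          rw [hr1, hr2]; nlinarith [hNK, abs_nonneg (t^2-2*t*x)]
  have hsq : (gReg η t x)^2 ≤ ((1+K)/2)^2 * ((t^2-2*t*x)^2 / (x^2+η^2)^2) := by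
    have := pow_le_pow_left₀ (abs_nonneg (gReg η t x)) habs 2
    rw [sq_abs] at this
    calc (gReg η t x)^2 ≤ ((1+K)/2 * (|t^2-2*t*x| / (x^2+η^2)))^2 := this
      _ = ((1+K)/2)^2 * ((t^2-2*t*x)^2 / (x^2+η^2)^2) := by
          rw [mul_pow, div_pow, div_pow, sq_abs]
  have hnum : (t^2-2*t*x)^2 ≤ (2*t^4+8*t^2) * (1+x^2) := by
    nlinarith [sq_nonneg (t^2*x + t), sq_nonneg t, sq_nonneg (t*x), sq_nonneg x]
  calc (gReg η t x)^2 ≤ ((1+K)/2)^2 * ((t^2-2*t*x)^2 / (x^2+η^2)^2) := hsq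
    _ ≤ ((1+K)/2)^2 * ((2*t^4+8*t^2) * (1+x^2) / (m*(1+x^2))^2) := by
        have hd2 : (m*(1+x^2))^2 ≤ (x^2+η^2)^2 := by
          apply pow_le_pow_left₀ (by positivity) hm
        exact mul_le_mul_of_nonneg_left
          (div_le_div₀ (by positivity) hnum (by positivity) hd2) (by positivity)
    _ = ((1+K)/2)^2 * (2*t^4+8*t^2) / m^2 * (1+x^2)⁻¹ := by
        field_simp

lemma strip_bound (η t x y : ℝ) (hη : 0 < η) (h : (x - y)^2 ≤ 1) :
    |gReg η t x - gReg η t y| ≤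
      (|t|/2) * (1 + (2+2*t^2)*(1+η^2)/η^2) * (4*(1+η^2)/η^2) / (x^2+η^2) * |x - y| := by
  set B := (|t|/2) * (1 + (2+2*t^2)*(1+η^2)/η^2) with hBdef
  have hB0 : (0:ℝ) ≤ B := by rw [hBdef]; positivity
  set K := 4*(1+η^2)/η^2 with hKdef
  have hK0 : (0:ℝ) < K := by rw [hKdef]; positivity
  have hD : (0:ℝ) < x^2+η^2 := by positivity
  have hxy : |x - y| ≤ 1 := (sq_le_one_iff_abs_le_one _).1 h
  have key := Convex.norm_image_sub_le_of_norm_hasDerivWithin_le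
    (f := gReg η t) (f' := gderiv η t) (s := Metric.closedBall x 1)
    (C := B * K / (x^2+η^2))
    (fun z _ => (gReg_hasDerivAt η t z hη).hasDerivWithinAt)
    (fun z hz => by
      have hzx : (z - x)^2 ≤ 1 := by
        rw [Metric.mem_closedBall, Real.dist_eq] at hz
        calc (z-x)^2 = |z-x|^2 := (sq_abs _).symm
          _ ≤ 1^2 := by apply pow_le_pow_left₀ (abs_nonneg _) hz
          _ = 1 := one_pow 2
      have hup : x^2+η^2 ≤ K * (z^2+η^2) := by
        have := sq_upper_aux η 1 z x hη zero_le_one hzx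
        calc x^2+η^2 ≤ (2+2*1)*(1+η^2)/η^2 * (z^2+η^2) := this
          _ ≤ K * (z^2+η^2) := by
              rw [hKdef]
              have : (0:ℝ) ≤ z^2+η^2 := by positivity
              nlinarith [sq_nonneg η, this]
      calc ‖gderiv η t z‖ = |gderiv η t z| := rfl
        _ ≤ B / (z^2+η^2) := gderiv_bound η t z hη
        _ ≤ B * K / (x^2+η^2) := by
            rw [div_le_div_iff₀ (by positivity) hD]
            nlinarith [hB0, hup, sq_nonneg z, sq_nonneg η])
    (convex_closedBall x 1)
    (Metric.mem_closedBall_self zero_le_one)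
    (by rw [Metric.mem_closedBall, Real.dist_eq, abs_sub_comm]; exact hxy)
  rw [Real.norm_eq_abs, Real.norm_eq_abs] at key
  calc |gReg η t x - gReg η t y| = |gReg η t y - gReg η t x| := abs_sub_comm _ _
    _ ≤ B * K / (x^2+η^2) * |y - x| := key
    _ = B * K / (x^2+η^2) * |x - y| := by rw [abs_sub_comm y x]

/-- Key pointwise domination: the H^{1/2} integrand is dominated by
`C * ((1+x²)⁻¹ + (1+y²)⁻¹) * min 1 ((x-y)²)⁻¹`. -/
lemma key_estimate (η t : ℝ) (hη : 0 < η) : ∃ C : ℝ, 0 ≤ C ∧ ∀ x y : ℝ,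
    (gReg η t x - gReg η t y)^2 / (x - y)^2 ≤
      C * (((1+x^2)⁻¹ + (1+y^2)⁻¹) * min 1 (((x-y)^2)⁻¹)) := by
  obtain ⟨Cg, hCg0, hgb⟩ : ∃ C : ℝ, 0 ≤ C ∧ ∀ x : ℝ, (gReg η t x)^2 ≤ C * (1+x^2)⁻¹ :=
    ⟨_, by positivity, fun x => g_sq_bound η t x hη⟩
  obtain ⟨L, hL0, hstrip⟩ : ∃ L : ℝ, 0 ≤ L ∧ ∀ x y : ℝ, (x - y)^2 ≤ 1 →
      |gReg η t x - gReg η t y| ≤ L / (x^2+η^2) * |x - y| :=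
    ⟨_, by positivity, fun x y h => strip_bound η t x y hη h⟩
  obtain ⟨m, hm0, hmb⟩ : ∃ m : ℝ, 0 < m ∧ ∀ x : ℝ, m * (1+x^2) ≤ x^2+η^2 := by
    refine ⟨min 1 (η^2), lt_min one_pos (by positivity), fun x => ?_⟩
    rcases le_total (η^2) 1 with h | h
    · rw [min_eq_right h]; nlinarith
    · rw [min_eq_left h]; nlinarith
  refine ⟨max ((L/m)^2) (2*Cg), le_max_of_le_right (by linarith), fun x y => ?_⟩
  have hψx : (0:ℝ) < (1+x^2)⁻¹ := by positivity
  have hψy : (0:ℝ) < (1+y^2)⁻¹ := by positivity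
  have hmax1 : (L/m)^2 ≤ max ((L/m)^2) (2*Cg) := le_max_left _ _
  have hmax2 : 2*Cg ≤ max ((L/m)^2) (2*Cg) := le_max_right _ _
  have hM0 : (0:ℝ) ≤ max ((L/m)^2) (2*Cg) := le_trans (sq_nonneg _) hmax1
  rcases eq_or_ne x y with rfl | hne
  · simp [sub_self]
  have hd0 : (0:ℝ) < (x-y)^2 := by
    have : x - y ≠ 0 := sub_ne_zero.2 hne
    positivity
  rcases le_or_gt ((x-y)^2) 1 with hle | hgt
  · -- near-diagonal: Lipschitz bound
    have hmin : min 1 (((x-y)^2)⁻¹) = 1 := min_eq_left ((one_le_inv₀ hd0).2 hle)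
    have hst := hstrip x y hle
    have hDm := hmb x
    have hsq : (gReg η t x - gReg η t y)^2 ≤ (L / (x^2+η^2))^2 * (x-y)^2 := by
      have := pow_le_pow_left₀ (abs_nonneg (gReg η t x - gReg η t y)) hst 2
      rw [sq_abs, mul_pow, sq_abs] at this
      exact this
    have hD : (0:ℝ) < x^2+η^2 := by positivity
    have hms : m^2*(1+x^2) ≤ (x^2+η^2)^2 := by
      nlinarith [mul_self_le_mul_self (show (0:ℝ) ≤ m*(1+x^2) by positivity) hDm,
        sq_nonneg (m*x), hm0]
    calc (gReg η t x - gReg η t y)^2 / (x - y)^2 ≤ (L / (x^2+η^2))^2 := by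
          rw [div_le_iff₀ hd0]; exact hsq
      _ ≤ (L/m)^2 * (1+x^2)⁻¹ := by
          rw [show (L/m)^2 * (1+x^2)⁻¹ = L^2/(m^2*(1+x^2)) by
            rw [div_pow]; field_simp]
          rw [div_pow, div_le_div_iff₀ (by positivity) (by positivity)]
          exact mul_le_mul_of_nonneg_left hms (sq_nonneg L)
      _ ≤ max ((L/m)^2) (2*Cg) * (((1+x^2)⁻¹ + (1+y^2)⁻¹) * min 1 (((x-y)^2)⁻¹)) := by
          rw [hmin, mul_one]
          calc (L/m)^2 * (1+x^2)⁻¹ ≤ max ((L/m)^2) (2*Cg) * (1+x^2)⁻¹ :=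
                mul_le_mul_of_nonneg_right hmax1 hψx.le
            _ ≤ max ((L/m)^2) (2*Cg) * ((1+x^2)⁻¹ + (1+y^2)⁻¹) :=
                mul_le_mul_of_nonneg_left (by linarith) hM0
  · -- far from diagonal: L² decay bound
    have hmin : min 1 (((x-y)^2)⁻¹) = ((x-y)^2)⁻¹ :=
      min_eq_right (inv_le_one_of_one_le₀ hgt.le)
    have hgx := hgb x
    have hgy := hgb y
    have hsum : (gReg η t x - gReg η t y)^2 ≤ 2*Cg * ((1+x^2)⁻¹ + (1+y^2)⁻¹) := by
      nlinarith [sq_nonneg (gReg η t x + gReg η t y)]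
    calc (gReg η t x - gReg η t y)^2 / (x - y)^2
        = (gReg η t x - gReg η t y)^2 * ((x-y)^2)⁻¹ := div_eq_mul_inv _ _
      _ ≤ 2*Cg * ((1+x^2)⁻¹ + (1+y^2)⁻¹) * ((x-y)^2)⁻¹ :=
          mul_le_mul_of_nonneg_right hsum (by positivity)
      _ ≤ max ((L/m)^2) (2*Cg) * (((1+x^2)⁻¹ + (1+y^2)⁻¹) * min 1 (((x-y)^2)⁻¹)) := by
          rw [hmin, ← mul_assoc]
          exact mul_le_mul_of_nonneg_right
            (mul_le_mul_of_nonneg_right hmax2 (by positivity)) (by positivity)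

lemma min_one_inv_sq_integrable :
    MeasureTheory.Integrable (fun h : ℝ => min 1 ((h^2)⁻¹)) := by
  have hGmeas : Measurable fun h : ℝ => min 1 ((h^2)⁻¹) :=
    measurable_const.min ((measurable_id.pow_const 2).inv)
  refine (integrable_inv_one_add_sq.const_mul 4).mono' hGmeas.aestronglyMeasurable ?_
  filter_upwards with h
  rw [Real.norm_eq_abs, abs_of_nonneg (le_min zero_le_one (by positivity))]
  rcases le_total (h^2) 1 with hc | hc
  · calc min 1 ((h^2)⁻¹) ≤ 1 := min_le_left _ _
      _ ≤ 4 * (1+h^2)⁻¹ := by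
          rw [show (4:ℝ)*(1+h^2)⁻¹ = 4/(1+h^2) from (div_eq_mul_inv _ _).symm,
            le_div_iff₀ (by positivity)]
          nlinarith
  · have h0 : (0:ℝ) < h^2 := lt_of_lt_of_le one_pos hc
    calc min 1 ((h^2)⁻¹) ≤ (h^2)⁻¹ := min_le_right _ _
      _ ≤ 4 * (1+h^2)⁻¹ := by
          rw [show (4:ℝ)*(1+h^2)⁻¹ = 4/(1+h^2) from (div_eq_mul_inv _ _).symm,
            inv_eq_one_div, div_le_div_iff₀ h0 (by positivity)]
          nlinarith

/-- For η > 0 and t ∈ ℝ, g_t belongs to H^{1/2}(ℝ):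
∬_{ℝ²} |g_t(x) − g_t(y)|²/(x−y)² dx dy < ∞. -/
theorem gReg_mem_H_half (η t : ℝ) (hη : 0 < η) :
    MeasureTheory.Integrable
      (fun p : ℝ × ℝ => (gReg η t p.1 - gReg η t p.2) ^ 2 / (p.1 - p.2) ^ 2) := by
  obtain ⟨C, hC0, hC⟩ := key_estimate η t hη
  have hGmeas : Measurable fun h : ℝ => min 1 ((h^2)⁻¹) :=
    measurable_const.min ((measurable_id.pow_const 2).inv)
  have hψmeas : Measurable fun x : ℝ => (1+x^2)⁻¹ :=
    ((measurable_id.pow_const 2).const_add 1).inv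
  have hψint : Integrable (fun x : ℝ => (1+x^2)⁻¹) := integrable_inv_one_add_sq
  have hGint := min_one_inv_sq_integrable
  -- first term: (x, y) ↦ ψ(x) G(x - y)
  have hT1 : Integrable (fun p : ℝ×ℝ => (1+p.1^2)⁻¹ * min 1 (((p.1-p.2)^2)⁻¹))
      (volume : Measure (ℝ × ℝ)) := by
    rw [MeasureTheory.Measure.volume_eq_prod]
    have hF : AEStronglyMeasurable (fun z : ℝ×ℝ => (1+z.1^2)⁻¹ * min 1 ((z.2^2)⁻¹))
        ((volume : Measure ℝ).prod volume) :=
      ((hψmeas.comp measurable_fst).mul (hGmeas.comp measurable_snd)).aestronglyMeasurable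
    have h1 : Integrable (fun z : ℝ×ℝ => (1+z.1^2)⁻¹ * min 1 ((z.2^2)⁻¹))
        ((volume : Measure ℝ).prod volume) := hψint.mul_prod hGint
    have h2 := ((measurePreserving_prod_sub (volume : Measure ℝ) volume).integrable_comp hF).2 h1
    have heq : (fun p : ℝ×ℝ => (1+p.1^2)⁻¹ * min 1 (((p.1-p.2)^2)⁻¹))
        = ((fun z : ℝ×ℝ => (1+z.1^2)⁻¹ * min 1 ((z.2^2)⁻¹))
            ∘ (fun z : ℝ×ℝ => (z.1, z.2 - z.1))) := by
      funext p
      simp only [Function.comp_apply]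
      rw [show (p.2-p.1)^2 = (p.1-p.2)^2 by ring]
    rw [heq]
    exact h2
  -- second term: (x, y) ↦ ψ(y) G(x - y)
  have hT2 : Integrable (fun p : ℝ×ℝ => (1+p.2^2)⁻¹ * min 1 (((p.1-p.2)^2)⁻¹))
      (volume : Measure (ℝ × ℝ)) := by
    rw [MeasureTheory.Measure.volume_eq_prod]
    have hF : AEStronglyMeasurable (fun z : ℝ×ℝ => min 1 ((z.1^2)⁻¹) * (1+z.2^2)⁻¹)
        ((volume : Measure ℝ).prod volume) :=
      ((hGmeas.comp measurable_fst).mul (hψmeas.comp measurable_snd)).aestronglyMeasurable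
    have h1 : Integrable (fun z : ℝ×ℝ => min 1 ((z.1^2)⁻¹) * (1+z.2^2)⁻¹)
        ((volume : Measure ℝ).prod volume) := hGint.mul_prod hψint
    have h2 := ((measurePreserving_sub_prod (volume : Measure ℝ) volume).integrable_comp hF).2 h1
    have heq : (fun p : ℝ×ℝ => (1+p.2^2)⁻¹ * min 1 (((p.1-p.2)^2)⁻¹))
        = ((fun z : ℝ×ℝ => min 1 ((z.1^2)⁻¹) * (1+z.2^2)⁻¹)
            ∘ (fun z : ℝ×ℝ => (z.1 - z.2, z.2))) := by
      funext p
      simp only [Function.comp_apply]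
      ring
    rw [heq]
    exact h2
  -- the dominating function
  have hΦ : Integrable (fun p : ℝ×ℝ =>
      C * ((1+p.1^2)⁻¹ * min 1 (((p.1-p.2)^2)⁻¹))
        + C * ((1+p.2^2)⁻¹ * min 1 (((p.1-p.2)^2)⁻¹))) :=
    (hT1.const_mul C).add (hT2.const_mul C)
  -- measurability of the integrand
  have hgc : Continuous (gReg η t) := by
    apply continuous_const.mul
    apply Continuous.log
    · exact Continuous.div (by fun_prop) (by fun_prop) (fun x => by positivity)
    · intro x
      have h1 : (0:ℝ) < ((x - t)^2 + η^2) / (x^2 + η^2) := by positivity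
      exact ne_of_gt h1
  have hfm : Measurable (fun p : ℝ × ℝ =>
      (gReg η t p.1 - gReg η t p.2) ^ 2 / (p.1 - p.2) ^ 2) := by
    apply Measurable.div
    · exact (((hgc.comp continuous_fst).sub (hgc.comp continuous_snd)).pow 2).measurable
    · exact ((continuous_fst.sub continuous_snd).pow 2).measurable
  apply hΦ.mono' hfm.aestronglyMeasurable
  filter_upwards with p
  rw [Real.norm_eq_abs, abs_of_nonneg (div_nonneg (sq_nonneg _) (sq_nonneg _))]
  calc (gReg η t p.1 - gReg η t p.2) ^ 2 / (p.1 - p.2) ^ 2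
      ≤ C * (((1+p.1^2)⁻¹ + (1+p.2^2)⁻¹) * min 1 (((p.1-p.2)^2)⁻¹)) := hC p.1 p.2
    _ = C * ((1+p.1^2)⁻¹ * min 1 (((p.1-p.2)^2)⁻¹))
        + C * ((1+p.2^2)⁻¹ * min 1 (((p.1-p.2)^2)⁻¹)) := by ring
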